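/- Let β > 0. There is a constant C depending only on β such that the following holds. If A, B : L × L → M₂(ℝ) are infinite matrices with |A|_{β+} < ∞ and |B|_{β+} < ∞, then for all c, d ∈ L the entry sums (AB)(c,d) = ∑_{e ∈ L} A(c,e)·B(e,d) and (BA)(c,d) = ∑_{e ∈ L} B(c,e)·A(e,d) converge absolutely, and the products satisfy |AB|_{β+} ≤ C·|A|_{β+}·|B|_{β+} and |BA|_{β+} ≤ C·|A|_{β+}·|B|_{β+}. -/

import Mathlib

/-- Squared Frobenius norm of a real `2×2` matrix. -/
def frobSq (M : Matrix (Fin 2) (Fin 2) ℝ) : ℝ := ∑ i, ∑ j, M i j ^ 2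

/-- Hilbert–Schmidt norm of the block `A_{[a]}^{[b]}` of an infinite matrix
`A : L × L → M₂(ℝ)`, where `[a] = {c : w c = w a}`. -/
noncomputable def hsBlock {L : Type*} (w : L → ℕ)
    (A : L → L → Matrix (Fin 2) (Fin 2) ℝ) (a b : L) : ℝ :=
  Real.sqrt (∑' p : {c : L // w c = w a} × {d : L // w d = w b}, frobSq (A p.1.1 p.2.1))

/-- Entrywise product of two infinite matrices with `2×2` matrix entries. -/
noncomputable def infMul {L : Type*} (A B : L → L → Matrix (Fin 2) (Fin 2) ℝ)
    (c d : L) : Matrix (Fin 2) (Fin 2) ℝ :=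
  Matrix.of fun i j => ∑' e : L, (A c e * B e d) i j

/-- Lemma 4.1(ii): for `β > 0` there is `C = C(β)` such that if `|A|_{β+} ≤ KA` and
`|B|_{β+} ≤ KB` then the entry sums of `AB` and `BA` converge absolutely and
`|AB|_{β+}, |BA|_{β+} ≤ C · KA · KB`. -/




lemma frobSq_nonneg (M : Matrix (Fin 2) (Fin 2) ℝ) : 0 ≤ frobSq M := by
  unfold frobSq; positivity

lemma hsBlock_nonneg {L : Type*} (w : L → ℕ) (A : L → L → Matrix (Fin 2) (Fin 2) ℝ)
    (a b : L) : 0 ≤ hsBlock w A a b := Real.sqrt_nonneg _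

lemma hsBlock_sq {L : Type*} (w : L → ℕ) (A : L → L → Matrix (Fin 2) (Fin 2) ℝ) (a b : L) :
    (hsBlock w A a b) ^ 2 = ∑' p : {c : L // w c = w a} × {d : L // w d = w b},
      frobSq (A p.1.1 p.2.1) :=
  Real.sq_sqrt (tsum_nonneg (fun p => frobSq_nonneg _))

lemma block_partial_sum_le {L : Type} (w : L → ℕ) (A : L → L → Matrix (Fin 2) (Fin 2) ℝ)
    (a b : L)
    (hA : Summable fun p : {c : L // w c = w a} × {d : L // w d = w b} => frobSq (A p.1.1 p.2.1))
    (F : Finset {c : L // w c = w a}) (E : Finset L) (hE : ∀ e ∈ E, w e = w b) :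
    ∑ e ∈ E, ∑ c ∈ F, frobSq (A c.1 e) ≤ (hsBlock w A a b) ^ 2 := by
  classical
  rw [hsBlock_sq]
  set E' : Finset {d : L // w d = w b} :=
    E.attach.map ⟨fun x => ⟨x.1, hE x.1 x.2⟩,
      fun x y h => Subtype.ext (congrArg Subtype.val h : (⟨x.1, hE x.1 x.2⟩ : {d : L // w d = w b}).1 = (⟨y.1, hE y.1 y.2⟩ : {d : L // w d = w b}).1)⟩ with hE'
  have h1 : ∑ p ∈ F ×ˢ E', frobSq (A p.1.1 p.2.1)
      ≤ ∑' p : {c : L // w c = w a} × {d : L // w d = w b}, frobSq (A p.1.1 p.2.1) :=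
    Summable.sum_le_tsum _ (fun p _ => frobSq_nonneg _) hA
  have h2 : ∑ p ∈ F ×ˢ E', frobSq (A p.1.1 p.2.1) = ∑ e ∈ E, ∑ c ∈ F, frobSq (A c.1 e) := by
    rw [Finset.sum_product, Finset.sum_comm]
    rw [hE', Finset.sum_map]
    simp only [Function.Embedding.coeFn_mk]
    rw [← Finset.sum_attach E (fun e => ∑ c ∈ F, frobSq (A c.1 e))]
    rfl
  rw [← h2]; exact h1

lemma block_partial_sum_le' {L : Type} (w : L → ℕ) (A : L → L → Matrix (Fin 2) (Fin 2) ℝ)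
    (a b : L)
    (hA : Summable fun p : {c : L // w c = w a} × {d : L // w d = w b} => frobSq (A p.1.1 p.2.1))
    (F : Finset {d : L // w d = w b}) (E : Finset L) (hE : ∀ e ∈ E, w e = w a) :
    ∑ e ∈ E, ∑ d ∈ F, frobSq (A e d.1) ≤ (hsBlock w A a b) ^ 2 := by
  classical
  rw [hsBlock_sq]
  set E' : Finset {c : L // w c = w a} :=
    E.attach.map ⟨fun x => ⟨x.1, hE x.1 x.2⟩,
      fun x y h => Subtype.ext (congrArg Subtype.val h : (⟨x.1, hE x.1 x.2⟩ : {c : L // w c = w a}).1 = (⟨y.1, hE y.1 y.2⟩ : {c : L // w c = w a}).1)⟩ with hE'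
  have h1 : ∑ p ∈ E' ×ˢ F, frobSq (A p.1.1 p.2.1)
      ≤ ∑' p : {c : L // w c = w a} × {d : L // w d = w b}, frobSq (A p.1.1 p.2.1) :=
    Summable.sum_le_tsum _ (fun p _ => frobSq_nonneg _) hA
  have h2 : ∑ p ∈ E' ×ˢ F, frobSq (A p.1.1 p.2.1) = ∑ e ∈ E, ∑ d ∈ F, frobSq (A e d.1) := by
    rw [Finset.sum_product]
    rw [hE', Finset.sum_map]
    simp only [Function.Embedding.coeFn_mk]
    rw [← Finset.sum_attach E (fun e => ∑ d ∈ F, frobSq (A e d.1))]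
    rfl
  rw [← h2]; exact h1



/-- Fiberwise summability criterion. -/
lemma summable_of_fiber_bounds {L : Type} (w : L → ℕ) (G : L → ℝ)
    (hG : ∀ e, 0 ≤ G e) {g : ℕ → ℝ} (hg : Summable g)
    (hbd : ∀ (n : ℕ) (E : Finset L), (∀ e ∈ E, w e = n) → ∑ e ∈ E, G e ≤ g n) :
    Summable G ∧ ∑' e, G e ≤ ∑' n, g n := by
  classical
  have hgn : ∀ n, 0 ≤ g n := fun n => by simpa using hbd n ∅ (by simp)
  have key : ∀ E : Finset L, ∑ e ∈ E, G e ≤ ∑' n, g n := by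
    intro E
    have h1 : ∑ n ∈ E.image w, ∑ e ∈ E.filter (fun e => w e = n), G e = ∑ e ∈ E, G e :=
      Finset.sum_fiberwise_of_maps_to (fun e he => Finset.mem_image_of_mem w he) G
    rw [← h1]
    calc ∑ n ∈ E.image w, ∑ e ∈ E.filter (fun e => w e = n), G e
        ≤ ∑ n ∈ E.image w, g n :=
          Finset.sum_le_sum (fun n _ => hbd n _ (fun e he => (Finset.mem_filter.mp he).2))
      _ ≤ ∑' n, g n := Summable.sum_le_tsum _ (fun n _ => hgn n) hg
  have hs : Summable G := summable_of_sum_le hG key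
  exact ⟨hs, Summable.tsum_le_of_sum_le hs key⟩


lemma shift_sum_bound {q : ℝ} (hq : 1 < q) (m : ℕ) :
    Summable (fun n : ℕ => (1 + |(m : ℝ) - n|) ^ (-q)) ∧
    ∑' n : ℕ, (1 + |(m : ℝ) - n|) ^ (-q) ≤ 2 * ∑' d : ℕ, ((d : ℝ) + 1) ^ (-q) := by
  have hG : Summable (fun d : ℕ => ((d : ℝ) + 1) ^ (-q)) := by
    have h0 : Summable (fun n : ℕ => (n : ℝ) ^ (-q)) :=
      Real.summable_nat_rpow.mpr (by linarith)
    have := (summable_nat_add_iff (f := fun n : ℕ => (n : ℝ) ^ (-q)) 1).mpr h0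
    simpa [Nat.cast_add] using this
  have hG2 : Summable (fun d : ℕ => ((d : ℝ) + 2) ^ (-q)) := by
    have := (summable_nat_add_iff (f := fun d : ℕ => ((d : ℝ) + 1) ^ (-q)) 1).mpr hG
    have h7 : ∀ j : ℕ, (((j + 1 : ℕ) : ℝ) + 1) ^ (-q) = ((j : ℝ) + 2) ^ (-q) := by
      intro j; push_cast; ring_nf
    simpa only [h7] using this
  have htail : ∑' d : ℕ, ((d : ℝ) + 2) ^ (-q) ≤ ∑' d : ℕ, ((d : ℝ) + 1) ^ (-q) := by
    have h := Summable.sum_add_tsum_nat_add (f := fun d : ℕ => ((d : ℝ) + 1) ^ (-q)) 1 hG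
    have h7 : ∀ j : ℕ, (((j + 1 : ℕ) : ℝ) + 1) ^ (-q) = ((j : ℝ) + 2) ^ (-q) := by
      intro j; push_cast; ring_nf
    have h9 : (0:ℝ) ≤ ∑ i ∈ Finset.range 1, ((i : ℝ) + 1) ^ (-q) := by positivity
    simp only [h7] at h
    linarith
  have heq : ∀ n : ℕ, (1 + |(m : ℝ) - (n + m : ℕ)| ) ^ (-q) = ((n : ℝ) + 1) ^ (-q) := by
    intro n
    have : |(m : ℝ) - (n + m : ℕ)| = n := by
      push_cast
      rw [abs_of_nonpos (by linarith)]
      ring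
    rw [this, add_comm]
  have hf : Summable (fun n : ℕ => (1 + |(m : ℝ) - n|) ^ (-q)) := by
    refine (summable_nat_add_iff m).mp ?_
    simpa only [heq] using hG
  refine ⟨hf, ?_⟩
  rw [← Summable.sum_add_tsum_nat_add m hf]
  have h2 : ∑' n : ℕ, (1 + |(m : ℝ) - (n + m : ℕ)|) ^ (-q) = ∑' d : ℕ, ((d : ℝ) + 1) ^ (-q) :=
    tsum_congr heq
  have h3 : ∑ i ∈ Finset.range m, (1 + |(m : ℝ) - i|) ^ (-q) ≤ ∑' d : ℕ, ((d : ℝ) + 1) ^ (-q) := by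
    have e1 : ∀ i ∈ Finset.range m, (1 + |(m : ℝ) - i|) ^ (-q)
        = (fun j : ℕ => ((j : ℝ) + 2) ^ (-q)) (m - 1 - i) := by
      intro i hi
      have hi' : i < m := Finset.mem_range.mp hi
      have h5 : ((m - 1 - i : ℕ) : ℝ) = (m : ℝ) - 1 - i := by
        have : m - 1 - i = m - (1 + i) := by omega
        rw [this, Nat.cast_sub (by omega)]
        push_cast; ring
      have h6 : |(m : ℝ) - i| = (m : ℝ) - i := by
        rw [abs_of_nonneg]
        have : (i : ℝ) ≤ m := Nat.cast_le.mpr hi'.le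
        linarith
      simp only [h5, h6]
      ring_nf
    rw [Finset.sum_congr rfl e1, Finset.sum_range_reflect (fun j : ℕ => ((j : ℝ) + 2) ^ (-q)) m]
    calc ∑ j ∈ Finset.range m, ((j : ℝ) + 2) ^ (-q)
        ≤ ∑' j : ℕ, ((j : ℝ) + 2) ^ (-q) := Summable.sum_le_tsum _ (fun j _ => by positivity) hG2
      _ ≤ ∑' d : ℕ, ((d : ℝ) + 1) ^ (-q) := htail
  rw [h2]
  linarith [h3]


noncomputable def auxSigma (β : ℝ) (m k n : ℕ) : ℝ :=
  (n : ℝ) ^ (-(2 * β)) * ((1 + |(m : ℝ) - n|)⁻¹ * (1 + |(k : ℝ) - n|)⁻¹)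

lemma auxSigma_nonneg (β : ℝ) (m k n : ℕ) : 0 ≤ auxSigma β m k n := by
  unfold auxSigma
  have h1 : (0:ℝ) < 1 + |(m : ℝ) - n| := by positivity
  have h2 : (0:ℝ) < 1 + |(k : ℝ) - n| := by positivity
  positivity

lemma scalar_bound (β : ℝ) (hβ : 0 < β) :
    ∃ C₀ : ℝ, 0 ≤ C₀ ∧ ∀ m k : ℕ, 1 ≤ m → 1 ≤ k →
      Summable (auxSigma β m k) ∧
      (1 + |(m : ℝ) - (k : ℝ)|) * ∑' n : ℕ, auxSigma β m k n ≤ C₀ := by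
  classical
  set θ : ℝ := min β 2⁻¹ with hθdef
  have hθ0 : 0 < θ := lt_min hβ (by norm_num)
  have hθβ : θ ≤ β := min_le_left _ _
  have hθ1 : θ < 1 := lt_of_le_of_lt (min_le_right _ _) (by norm_num)
  set s : ℝ := 2 * β / θ with hsdef
  have hs2 : 2 ≤ s := by
    rw [hsdef, le_div_iff₀ hθ0]; linarith
  set q : ℝ := (1 - θ)⁻¹ with hqdef
  have h1θ : 0 < 1 - θ := by linarith
  have hq1 : 1 < q := by
    rw [hqdef]
    nlinarith [mul_inv_cancel₀ (ne_of_gt h1θ), inv_pos.mpr h1θ,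
      mul_pos hθ0 (inv_pos.mpr h1θ)]
  have hc1s : Summable (fun n : ℕ => (n : ℝ) ^ (-s)) :=
    Real.summable_nat_rpow.mpr (by linarith)
  set c₁ : ℝ := ∑' n : ℕ, (n : ℝ) ^ (-s) with hc₁
  set c₂ : ℝ := ∑' d : ℕ, ((d : ℝ) + 1) ^ (-q) with hc₂
  have hc₁0 : 0 ≤ c₁ := tsum_nonneg (fun n => by positivity)
  have hc₂0 : 0 ≤ c₂ := tsum_nonneg (fun n => by positivity)
  refine ⟨2 * c₁ + 4 * c₂, by linarith, ?_⟩
  intro m k hm hk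
  have young : ∀ (x y : ℝ), 0 ≤ x → 1 ≤ y → x ^ (-(2*β)) * y⁻¹ ≤ x ^ (-s) + y ^ (-q) := by
    intro x y hx hy
    have hy0 : (0:ℝ) < y := by linarith
    have e1 : (x ^ (-s)) ^ θ = x ^ (-(2*β)) := by
      rw [← Real.rpow_mul hx]
      congr 1
      field_simp
      linear_combination (-(β * 2)) * mul_inv_cancel₀ (ne_of_gt hθ0)
    have e2 : (y ^ (-q)) ^ (1 - θ) = y⁻¹ := by
      rw [← Real.rpow_mul hy0.le]
      have : -q * (1 - θ) = -1 := by
        rw [hqdef]; field_simp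
      rw [this, Real.rpow_neg_one]
    have h := Real.geom_mean_le_arith_mean2_weighted hθ0.le h1θ.le
      (Real.rpow_nonneg hx (-s)) (Real.rpow_nonneg hy0.le (-q)) (by ring)
    rw [e1, e2] at h
    have ha : 0 ≤ x ^ (-s) := Real.rpow_nonneg hx _
    have hb : 0 ≤ y ^ (-q) := Real.rpow_nonneg hy0.le _
    nlinarith
  set Δ : ℝ := |(m : ℝ) - (k : ℝ)| with hΔ
  have hΔ0 : 0 ≤ Δ := abs_nonneg _
  set τ : ℕ → ℝ := fun n =>
    (2 * (n : ℝ) ^ (-s) + (1 + |(m : ℝ) - n|) ^ (-q)) + (1 + |(k : ℝ) - n|) ^ (-q) with hτdef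
  have hτ : Summable τ := ((hc1s.mul_left 2).add ((shift_sum_bound hq1 m).1)).add
    ((shift_sum_bound hq1 k).1)
  have ptwise : ∀ n : ℕ, (1 + Δ) * auxSigma β m k n ≤ τ n := by
    intro n
    have hy : (1:ℝ) ≤ 1 + |(m : ℝ) - n| := by linarith [abs_nonneg ((m:ℝ) - n)]
    have hz : (1:ℝ) ≤ 1 + |(k : ℝ) - n| := by linarith [abs_nonneg ((k:ℝ) - n)]
    set y := 1 + |(m : ℝ) - n| with hydef
    set z := 1 + |(k : ℝ) - n| with hzdef
    have hy0 : (0:ℝ) < y := by linarith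
    have hz0 : (0:ℝ) < z := by linarith
    have tri : 1 + Δ ≤ y + z := by
      have h1 : |(m : ℝ) - k| ≤ |(m : ℝ) - n| + |(n : ℝ) - k| := abs_sub_le _ _ _
      have h2 : |(n : ℝ) - k| = |(k : ℝ) - n| := abs_sub_comm _ _
      rw [hΔ, hydef, hzdef]
      rw [h2] at h1
      linarith
    have hσn : 0 ≤ auxSigma β m k n := auxSigma_nonneg β m k n
    have step1 : (1 + Δ) * auxSigma β m k n ≤ (y + z) * auxSigma β m k n :=
      mul_le_mul_of_nonneg_right tri hσn
    have heq : (y + z) * auxSigma β m k n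
        = (n:ℝ) ^ (-(2*β)) * z⁻¹ + (n:ℝ) ^ (-(2*β)) * y⁻¹ := by
      unfold auxSigma
      rw [← hydef, ← hzdef]
      field_simp
    have b1 : (n:ℝ) ^ (-(2*β)) * z⁻¹ ≤ (n:ℝ) ^ (-s) + z ^ (-q) :=
      young _ _ (Nat.cast_nonneg n) hz
    have b2 : (n:ℝ) ^ (-(2*β)) * y⁻¹ ≤ (n:ℝ) ^ (-s) + y ^ (-q) :=
      young _ _ (Nat.cast_nonneg n) hy
    rw [hτdef]
    simp only []
    rw [← hydef, ← hzdef]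
    calc (1 + Δ) * auxSigma β m k n ≤ (y + z) * auxSigma β m k n := step1
      _ = (n:ℝ) ^ (-(2*β)) * z⁻¹ + (n:ℝ) ^ (-(2*β)) * y⁻¹ := heq
      _ ≤ ((n:ℝ) ^ (-s) + z ^ (-q)) + ((n:ℝ) ^ (-s) + y ^ (-q)) := add_le_add b1 b2
      _ = (2 * (n : ℝ) ^ (-s) + y ^ (-q)) + z ^ (-q) := by ring
  have hσ : Summable (auxSigma β m k) := by
    refine Summable.of_nonneg_of_le (auxSigma_nonneg β m k) (fun n => ?_) hτ
    have := ptwise n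
    nlinarith [auxSigma_nonneg β m k n]
  constructor
  · exact hσ
  · have h1 : (1 + Δ) * ∑' n : ℕ, auxSigma β m k n = ∑' n : ℕ, (1 + Δ) * auxSigma β m k n :=
      (tsum_mul_left).symm
    rw [h1]
    have h2 : ∑' n : ℕ, (1 + Δ) * auxSigma β m k n ≤ ∑' n, τ n :=
      Summable.tsum_le_tsum ptwise (hσ.mul_left _) hτ
    have h3 : ∑' n, τ n = 2 * c₁ + (∑' n : ℕ, (1 + |(m : ℝ) - n|) ^ (-q))
        + (∑' n : ℕ, (1 + |(k : ℝ) - n|) ^ (-q)) := by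
      rw [hτdef, Summable.tsum_add ((hc1s.mul_left 2).add ((shift_sum_bound hq1 m).1)) ((shift_sum_bound hq1 k).1),
        Summable.tsum_add (hc1s.mul_left 2) ((shift_sum_bound hq1 m).1), tsum_mul_left]
    have h4 := (shift_sum_bound hq1 m).2
    have h5 := (shift_sum_bound hq1 k).2
    rw [h3] at h2
    linarith

section RowCol
variable {L : Type} (w : L → ℕ)

lemma row_bound (A : L → L → Matrix (Fin 2) (Fin 2) ℝ)
    (hA : ∀ a b : L, Summable fun p : {c : L // w c = w a} × {d : L // w d = w b} =>
      frobSq (A p.1.1 p.2.1))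
    (a : L) (u : ℕ → ℝ) (hu : ∀ n, 0 ≤ u n)
    (g : ℕ → ℝ) (hg : Summable g) (hg0 : ∀ n, 0 ≤ g n)
    (hgbd : ∀ e₀ : L, u (w e₀) * (hsBlock w A a e₀) ^ 2 ≤ g (w e₀))
    (F₁ : Finset {c : L // w c = w a}) :
    Summable (fun e => u (w e) * ∑ c ∈ F₁, frobSq (A c.1 e)) ∧
    ∑' e, (u (w e) * ∑ c ∈ F₁, frobSq (A c.1 e)) ≤ ∑' n, g n := by
  classical
  apply summable_of_fiber_bounds w _ (fun e => by
    have : 0 ≤ ∑ c ∈ F₁, frobSq (A c.1 e) := Finset.sum_nonneg (fun c _ => frobSq_nonneg _)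
    exact mul_nonneg (hu _) this) hg
  intro n E hE
  rcases E.eq_empty_or_nonempty with rfl | ⟨e₀, he₀⟩
  · simpa using hg0 n
  · have hn : w e₀ = n := hE e₀ he₀
    subst hn
    have h1 : ∑ e ∈ E, u (w e) * ∑ c ∈ F₁, frobSq (A c.1 e)
        = u (w e₀) * ∑ e ∈ E, ∑ c ∈ F₁, frobSq (A c.1 e) := by
      rw [Finset.mul_sum]
      exact Finset.sum_congr rfl (fun e he => by rw [hE e he])
    rw [h1]
    have h2 : ∑ e ∈ E, ∑ c ∈ F₁, frobSq (A c.1 e) ≤ (hsBlock w A a e₀) ^ 2 :=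
      block_partial_sum_le w A a e₀ (hA a e₀) F₁ E hE
    calc u (w e₀) * ∑ e ∈ E, ∑ c ∈ F₁, frobSq (A c.1 e)
        ≤ u (w e₀) * (hsBlock w A a e₀) ^ 2 := mul_le_mul_of_nonneg_left h2 (hu _)
      _ ≤ g (w e₀) := hgbd e₀

lemma col_bound (B : L → L → Matrix (Fin 2) (Fin 2) ℝ)
    (hB : ∀ a b : L, Summable fun p : {c : L // w c = w a} × {d : L // w d = w b} =>
      frobSq (B p.1.1 p.2.1))
    (b : L) (u : ℕ → ℝ) (hu : ∀ n, 0 ≤ u n)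
    (g : ℕ → ℝ) (hg : Summable g) (hg0 : ∀ n, 0 ≤ g n)
    (hgbd : ∀ e₀ : L, u (w e₀) * (hsBlock w B e₀ b) ^ 2 ≤ g (w e₀))
    (F₂ : Finset {d : L // w d = w b}) :
    Summable (fun e => u (w e) * ∑ d ∈ F₂, frobSq (B e d.1)) ∧
    ∑' e, (u (w e) * ∑ d ∈ F₂, frobSq (B e d.1)) ≤ ∑' n, g n := by
  classical
  apply summable_of_fiber_bounds w _ (fun e => by
    have : 0 ≤ ∑ d ∈ F₂, frobSq (B e d.1) := Finset.sum_nonneg (fun d _ => frobSq_nonneg _)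
    exact mul_nonneg (hu _) this) hg
  intro n E hE
  rcases E.eq_empty_or_nonempty with rfl | ⟨e₀, he₀⟩
  · simpa using hg0 n
  · have hn : w e₀ = n := hE e₀ he₀
    subst hn
    have h1 : ∑ e ∈ E, u (w e) * ∑ d ∈ F₂, frobSq (B e d.1)
        = u (w e₀) * ∑ e ∈ E, ∑ d ∈ F₂, frobSq (B e d.1) := by
      rw [Finset.mul_sum]
      exact Finset.sum_congr rfl (fun e he => by rw [hE e he])
    rw [h1]
    have h2 : ∑ e ∈ E, ∑ d ∈ F₂, frobSq (B e d.1) ≤ (hsBlock w B e₀ b) ^ 2 :=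
      block_partial_sum_le' w B e₀ b (hB e₀ b) F₂ E hE
    calc u (w e₀) * ∑ e ∈ E, ∑ d ∈ F₂, frobSq (B e d.1)
        ≤ u (w e₀) * (hsBlock w B e₀ b) ^ 2 := mul_le_mul_of_nonneg_left h2 (hu _)
      _ ≤ g (w e₀) := hgbd e₀

end RowCol


lemma abs_mul_le_weighted {u x y : ℝ} (hu : 0 < u) : |x * y| ≤ 2⁻¹ * (u * x ^ 2 + u⁻¹ * y ^ 2) := by
  have h : 0 ≤ u⁻¹ * (u * |x| - |y|) ^ 2 := mul_nonneg (by positivity) (sq_nonneg _)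
  have hexp : u⁻¹ * (u * |x| - |y|) ^ 2 = u * x ^ 2 - 2 * (|x| * |y|) + u⁻¹ * y ^ 2 := by
    have h1 : (u * |x| - |y|) ^ 2 = u ^ 2 * |x| ^ 2 - 2 * u * (|x| * |y|) + |y| ^ 2 := by ring
    rw [h1, sq_abs, sq_abs]
    field_simp
  rw [abs_mul]
  nlinarith [h, hexp]

lemma rowSq_le_frobSq (M : Matrix (Fin 2) (Fin 2) ℝ) (i : Fin 2) :
    ∑ t, M i t ^ 2 ≤ frobSq M := by
  unfold frobSq
  exact Finset.single_le_sum (f := fun i' => ∑ t, M i' t ^ 2)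
    (fun i' _ => Finset.sum_nonneg (fun t _ => sq_nonneg _)) (Finset.mem_univ i)

lemma colSq_le_frobSq (M : Matrix (Fin 2) (Fin 2) ℝ) (j : Fin 2) :
    ∑ t, M t j ^ 2 ≤ frobSq M := by
  unfold frobSq
  refine Finset.sum_le_sum (fun t _ => ?_)
  exact Finset.single_le_sum (f := fun j' => M t j' ^ 2) (fun j' _ => sq_nonneg _)
    (Finset.mem_univ j)

lemma entry_abs_le (M N : Matrix (Fin 2) (Fin 2) ℝ) (i j : Fin 2) :
    |(M * N) i j| ≤ ∑ t, |M i t| * |N t j| := by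
  rw [Matrix.mul_apply]
  refine le_trans (Finset.abs_sum_le_sum_abs _ _) ?_
  refine Finset.sum_le_sum (fun t _ => ?_)
  rw [abs_mul]

lemma rowcol_le_weighted {u : ℝ} (hu : 0 < u) (M N : Matrix (Fin 2) (Fin 2) ℝ) (i j : Fin 2) :
    ∑ t, |M i t| * |N t j| ≤ 2⁻¹ * (u * frobSq M + u⁻¹ * frobSq N) := by
  have h1 : ∑ t, |M i t| * |N t j| ≤ ∑ t : Fin 2, 2⁻¹ * (u * M i t ^ 2 + u⁻¹ * N t j ^ 2) := by
    refine Finset.sum_le_sum (fun t _ => ?_)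
    have := abs_mul_le_weighted (x := M i t) (y := N t j) hu
    rwa [abs_mul] at this
  refine h1.trans ?_
  have h2 : ∑ t : Fin 2, 2⁻¹ * (u * M i t ^ 2 + u⁻¹ * N t j ^ 2)
      = 2⁻¹ * (u * ∑ t, M i t ^ 2 + u⁻¹ * ∑ t, N t j ^ 2) := by
    rw [Fin.sum_univ_two, Fin.sum_univ_two, Fin.sum_univ_two]
    ring
  rw [h2]
  have h3 := rowSq_le_frobSq M i
  have h4 := colSq_le_frobSq N j
  have h5 : 0 ≤ u⁻¹ := inv_nonneg.mpr hu.le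
  nlinarith

lemma aux_alg (β : ℝ) (K : ℝ) (m k n : ℕ) (hm : 1 ≤ m) (hn : 1 ≤ n) :
    ((1 + |(m : ℝ) - n|) * (1 + |(k : ℝ) - n|)⁻¹) *
      (K / ((1 + |(m : ℝ) - n|) * (m : ℝ) ^ β * (n : ℝ) ^ β)) ^ 2
    = K ^ 2 * (m : ℝ) ^ (-(2 * β)) * auxSigma β m k n := by
  have hm0 : (0:ℝ) < m := by exact_mod_cast hm
  have hn0 : (0:ℝ) < n := by exact_mod_cast hn
  have hx : (0:ℝ) < 1 + |(m : ℝ) - n| := by positivity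
  have hz : (0:ℝ) < 1 + |(k : ℝ) - n| := by positivity
  have hMβ : (0:ℝ) < (m : ℝ) ^ β := Real.rpow_pos_of_pos hm0 β
  have hNβ : (0:ℝ) < (n : ℝ) ^ β := Real.rpow_pos_of_pos hn0 β
  have em : (m : ℝ) ^ (-(2 * β)) = ((m : ℝ) ^ β)⁻¹ * ((m : ℝ) ^ β)⁻¹ := by
    rw [show -(2 * β) = -β + -β by ring, Real.rpow_add hm0, Real.rpow_neg hm0.le]
  have en : (n : ℝ) ^ (-(2 * β)) = ((n : ℝ) ^ β)⁻¹ * ((n : ℝ) ^ β)⁻¹ := by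
    rw [show -(2 * β) = -β + -β by ring, Real.rpow_add hn0, Real.rpow_neg hn0.le]
  unfold auxSigma
  rw [em, en]
  field_simp

lemma aux_alg' (β : ℝ) (K : ℝ) (m k n : ℕ) (hk : 1 ≤ k) (hn : 1 ≤ n) :
    ((1 + |(m : ℝ) - n|) * (1 + |(k : ℝ) - n|)⁻¹)⁻¹ *
      (K / ((1 + |(n : ℝ) - k|) * (n : ℝ) ^ β * (k : ℝ) ^ β)) ^ 2
    = K ^ 2 * (k : ℝ) ^ (-(2 * β)) * auxSigma β m k n := by
  have hk0 : (0:ℝ) < k := by exact_mod_cast hk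
  have hn0 : (0:ℝ) < n := by exact_mod_cast hn
  have hx : (0:ℝ) < 1 + |(m : ℝ) - n| := by positivity
  have hz : (0:ℝ) < 1 + |(k : ℝ) - n| := by positivity
  have hKβ : (0:ℝ) < (k : ℝ) ^ β := Real.rpow_pos_of_pos hk0 β
  have hNβ : (0:ℝ) < (n : ℝ) ^ β := Real.rpow_pos_of_pos hn0 β
  have ek : (k : ℝ) ^ (-(2 * β)) = ((k : ℝ) ^ β)⁻¹ * ((k : ℝ) ^ β)⁻¹ := by
    rw [show -(2 * β) = -β + -β by ring, Real.rpow_add hk0, Real.rpow_neg hk0.le]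
  have en : (n : ℝ) ^ (-(2 * β)) = ((n : ℝ) ^ β)⁻¹ * ((n : ℝ) ^ β)⁻¹ := by
    rw [show -(2 * β) = -β + -β by ring, Real.rpow_add hn0, Real.rpow_neg hn0.le]
  have habs : |(n : ℝ) - k| = |(k : ℝ) - n| := abs_sub_comm _ _
  unfold auxSigma
  rw [habs, ek, en]
  field_simp


noncomputable def auxU (m k : ℕ) (n : ℕ) : ℝ :=
  (1 + |(m : ℝ) - n|) * (1 + |(k : ℝ) - n|)⁻¹

lemma auxU_pos (m k n : ℕ) : 0 < auxU m k n := by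
  unfold auxU
  have h1 : (0:ℝ) < 1 + |(m : ℝ) - n| := by positivity
  have h2 : (0:ℝ) < 1 + |(k : ℝ) - n| := by positivity
  positivity

lemma rowA_master {L : Type} (w : L → ℕ) (hw : ∀ a, 1 ≤ w a) (β : ℝ)
    (A : L → L → Matrix (Fin 2) (Fin 2) ℝ) (KA : ℝ)
    (hA : ∀ a b : L, Summable fun p : {c : L // w c = w a} × {d : L // w d = w b} =>
      frobSq (A p.1.1 p.2.1))
    (hKA : ∀ a b : L, (1 + |(w a : ℝ) - (w b : ℝ)|) * (w a : ℝ) ^ β * (w b : ℝ) ^ β *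
      hsBlock w A a b ≤ KA)
    (a b : L) (hσs : Summable (auxSigma β (w a) (w b)))
    (F₁ : Finset {c : L // w c = w a}) :
    Summable (fun e => auxU (w a) (w b) (w e) * ∑ c ∈ F₁, frobSq (A c.1 e)) ∧
    ∑' e, (auxU (w a) (w b) (w e) * ∑ c ∈ F₁, frobSq (A c.1 e))
      ≤ KA ^ 2 * (w a : ℝ) ^ (-(2 * β)) * ∑' n, auxSigma β (w a) (w b) n := by
  have hg : Summable (fun n => KA ^ 2 * (w a : ℝ) ^ (-(2 * β)) * auxSigma β (w a) (w b) n) :=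
    hσs.mul_left _
  have hg0 : ∀ n, 0 ≤ KA ^ 2 * (w a : ℝ) ^ (-(2 * β)) * auxSigma β (w a) (w b) n := fun n =>
    mul_nonneg (mul_nonneg (sq_nonneg _) (Real.rpow_nonneg (Nat.cast_nonneg _) _))
      (auxSigma_nonneg _ _ _ _)
  have hgbd : ∀ e₀ : L, auxU (w a) (w b) (w e₀) * (hsBlock w A a e₀) ^ 2
      ≤ KA ^ 2 * (w a : ℝ) ^ (-(2 * β)) * auxSigma β (w a) (w b) (w e₀) := by
    intro e₀
    have hma : (0:ℝ) < (w a : ℝ) := by exact_mod_cast hw a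
    have hne : (0:ℝ) < (w e₀ : ℝ) := by exact_mod_cast hw e₀
    have hP : (0:ℝ) < (1 + |(w a : ℝ) - (w e₀ : ℝ)|) * (w a : ℝ) ^ β * (w e₀ : ℝ) ^ β := by
      have h1 : (0:ℝ) < 1 + |(w a : ℝ) - (w e₀ : ℝ)| := by positivity
      have h2 : (0:ℝ) < (w a : ℝ) ^ β := Real.rpow_pos_of_pos hma β
      have h3 : (0:ℝ) < (w e₀ : ℝ) ^ β := Real.rpow_pos_of_pos hne β
      positivity
    have hle : hsBlock w A a e₀
        ≤ KA / ((1 + |(w a : ℝ) - (w e₀ : ℝ)|) * (w a : ℝ) ^ β * (w e₀ : ℝ) ^ β) :=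
      (le_div_iff₀ hP).mpr (by rw [mul_comm]; exact hKA a e₀)
    have hsq : (hsBlock w A a e₀) ^ 2
        ≤ (KA / ((1 + |(w a : ℝ) - (w e₀ : ℝ)|) * (w a : ℝ) ^ β * (w e₀ : ℝ) ^ β)) ^ 2 :=
      pow_le_pow_left₀ (hsBlock_nonneg _ _ _ _) hle 2
    calc auxU (w a) (w b) (w e₀) * (hsBlock w A a e₀) ^ 2
        ≤ auxU (w a) (w b) (w e₀) *
          (KA / ((1 + |(w a : ℝ) - (w e₀ : ℝ)|) * (w a : ℝ) ^ β * (w e₀ : ℝ) ^ β)) ^ 2 :=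
          mul_le_mul_of_nonneg_left hsq (auxU_pos _ _ _).le
      _ = KA ^ 2 * (w a : ℝ) ^ (-(2 * β)) * auxSigma β (w a) (w b) (w e₀) := by
          unfold auxU
          exact aux_alg β KA (w a) (w b) (w e₀) (hw a) (hw e₀)
  have h := row_bound w A hA a (auxU (w a) (w b)) (fun n => (auxU_pos _ _ n).le)
    _ hg hg0 hgbd F₁
  refine ⟨h.1, h.2.trans_eq ?_⟩
  exact tsum_mul_left

lemma colB_master {L : Type} (w : L → ℕ) (hw : ∀ a, 1 ≤ w a) (β : ℝ)
    (B : L → L → Matrix (Fin 2) (Fin 2) ℝ) (KB : ℝ)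
    (hB : ∀ a b : L, Summable fun p : {c : L // w c = w a} × {d : L // w d = w b} =>
      frobSq (B p.1.1 p.2.1))
    (hKB : ∀ a b : L, (1 + |(w a : ℝ) - (w b : ℝ)|) * (w a : ℝ) ^ β * (w b : ℝ) ^ β *
      hsBlock w B a b ≤ KB)
    (a b : L) (hσs : Summable (auxSigma β (w a) (w b)))
    (F₂ : Finset {d : L // w d = w b}) :
    Summable (fun e => (auxU (w a) (w b) (w e))⁻¹ * ∑ d ∈ F₂, frobSq (B e d.1)) ∧
    ∑' e, ((auxU (w a) (w b) (w e))⁻¹ * ∑ d ∈ F₂, frobSq (B e d.1))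
      ≤ KB ^ 2 * (w b : ℝ) ^ (-(2 * β)) * ∑' n, auxSigma β (w a) (w b) n := by
  have hg : Summable (fun n => KB ^ 2 * (w b : ℝ) ^ (-(2 * β)) * auxSigma β (w a) (w b) n) :=
    hσs.mul_left _
  have hg0 : ∀ n, 0 ≤ KB ^ 2 * (w b : ℝ) ^ (-(2 * β)) * auxSigma β (w a) (w b) n := fun n =>
    mul_nonneg (mul_nonneg (sq_nonneg _) (Real.rpow_nonneg (Nat.cast_nonneg _) _))
      (auxSigma_nonneg _ _ _ _)
  have hgbd : ∀ e₀ : L, (auxU (w a) (w b) (w e₀))⁻¹ * (hsBlock w B e₀ b) ^ 2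
      ≤ KB ^ 2 * (w b : ℝ) ^ (-(2 * β)) * auxSigma β (w a) (w b) (w e₀) := by
    intro e₀
    have hmb : (0:ℝ) < (w b : ℝ) := by exact_mod_cast hw b
    have hne : (0:ℝ) < (w e₀ : ℝ) := by exact_mod_cast hw e₀
    have hP : (0:ℝ) < (1 + |(w e₀ : ℝ) - (w b : ℝ)|) * (w e₀ : ℝ) ^ β * (w b : ℝ) ^ β := by
      have h1 : (0:ℝ) < 1 + |(w e₀ : ℝ) - (w b : ℝ)| := by positivity
      have h2 : (0:ℝ) < (w b : ℝ) ^ β := Real.rpow_pos_of_pos hmb β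
      have h3 : (0:ℝ) < (w e₀ : ℝ) ^ β := Real.rpow_pos_of_pos hne β
      positivity
    have hle : hsBlock w B e₀ b
        ≤ KB / ((1 + |(w e₀ : ℝ) - (w b : ℝ)|) * (w e₀ : ℝ) ^ β * (w b : ℝ) ^ β) :=
      (le_div_iff₀ hP).mpr (by rw [mul_comm]; exact hKB e₀ b)
    have hsq : (hsBlock w B e₀ b) ^ 2
        ≤ (KB / ((1 + |(w e₀ : ℝ) - (w b : ℝ)|) * (w e₀ : ℝ) ^ β * (w b : ℝ) ^ β)) ^ 2 :=
      pow_le_pow_left₀ (hsBlock_nonneg _ _ _ _) hle 2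
    calc (auxU (w a) (w b) (w e₀))⁻¹ * (hsBlock w B e₀ b) ^ 2
        ≤ (auxU (w a) (w b) (w e₀))⁻¹ *
          (KB / ((1 + |(w e₀ : ℝ) - (w b : ℝ)|) * (w e₀ : ℝ) ^ β * (w b : ℝ) ^ β)) ^ 2 :=
          mul_le_mul_of_nonneg_left hsq (inv_nonneg.mpr (auxU_pos _ _ _).le)
      _ = KB ^ 2 * (w b : ℝ) ^ (-(2 * β)) * auxSigma β (w a) (w b) (w e₀) := by
          unfold auxU
          exact aux_alg' β KB (w a) (w b) (w e₀) (hw b) (hw e₀)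
  have h := col_bound w B hB b (fun n => (auxU (w a) (w b) n)⁻¹)
    (fun n => inv_nonneg.mpr (auxU_pos _ _ n).le) _ hg hg0 hgbd F₂
  refine ⟨h.1, h.2.trans_eq ?_⟩
  exact tsum_mul_left


lemma entry_summ {L : Type} (w : L → ℕ) (hw : ∀ a, 1 ≤ w a) (β : ℝ)
    (A B : L → L → Matrix (Fin 2) (Fin 2) ℝ) (KA KB : ℝ)
    (hA : ∀ a b : L, Summable fun p : {c : L // w c = w a} × {d : L // w d = w b} =>
      frobSq (A p.1.1 p.2.1))
    (hB : ∀ a b : L, Summable fun p : {c : L // w c = w a} × {d : L // w d = w b} =>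
      frobSq (B p.1.1 p.2.1))
    (hKA : ∀ a b : L, (1 + |(w a : ℝ) - (w b : ℝ)|) * (w a : ℝ) ^ β * (w b : ℝ) ^ β *
      hsBlock w A a b ≤ KA)
    (hKB : ∀ a b : L, (1 + |(w a : ℝ) - (w b : ℝ)|) * (w a : ℝ) ^ β * (w b : ℝ) ^ β *
      hsBlock w B a b ≤ KB)
    (c d : L) (hσs : Summable (auxSigma β (w c) (w d))) (i j : Fin 2) :
    Summable fun e : L => |(A c e * B e d) i j| := by
  have hA1 := (rowA_master w hw β A KA hA hKA c d hσs ({⟨c, rfl⟩} : Finset {c' : L // w c' = w c})).1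
  have hB1 := (colB_master w hw β B KB hB hKB c d hσs ({⟨d, rfl⟩} : Finset {d' : L // w d' = w d})).1
  simp only [Finset.sum_singleton] at hA1 hB1
  refine Summable.of_nonneg_of_le (fun e => abs_nonneg _) (fun e => ?_)
    ((hA1.add hB1).mul_left 2⁻¹)
  calc |(A c e * B e d) i j| ≤ ∑ t, |A c e i t| * |B e d t j| := entry_abs_le _ _ i j
    _ ≤ 2⁻¹ * (auxU (w c) (w d) (w e) * frobSq (A c e)
        + (auxU (w c) (w d) (w e))⁻¹ * frobSq (B e d)) :=
      rowcol_le_weighted (auxU_pos (w c) (w d) (w e)) _ _ i j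


lemma prod_master {L : Type} (w : L → ℕ) (hw : ∀ a, 1 ≤ w a) (β : ℝ)
    (C₀ : ℝ)
    (A B : L → L → Matrix (Fin 2) (Fin 2) ℝ) (KA KB : ℝ) (hKA0 : 0 ≤ KA) (hKB0 : 0 ≤ KB)
    (hA : ∀ a b : L, Summable fun p : {c : L // w c = w a} × {d : L // w d = w b} =>
      frobSq (A p.1.1 p.2.1))
    (hB : ∀ a b : L, Summable fun p : {c : L // w c = w a} × {d : L // w d = w b} =>
      frobSq (B p.1.1 p.2.1))
    (hKA : ∀ a b : L, (1 + |(w a : ℝ) - (w b : ℝ)|) * (w a : ℝ) ^ β * (w b : ℝ) ^ β *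
      hsBlock w A a b ≤ KA)
    (hKB : ∀ a b : L, (1 + |(w a : ℝ) - (w b : ℝ)|) * (w a : ℝ) ^ β * (w b : ℝ) ^ β *
      hsBlock w B a b ≤ KB)
    (a b : L) (hσs : Summable (auxSigma β (w a) (w b)))
    (hσb : (1 + |((w a : ℕ) : ℝ) - ((w b : ℕ) : ℝ)|) * ∑' n, auxSigma β (w a) (w b) n ≤ C₀) :
    (1 + |(w a : ℝ) - (w b : ℝ)|) * (w a : ℝ) ^ β * (w b : ℝ) ^ β *
      hsBlock w (infMul A B) a b ≤ C₀ * KA * KB := by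
  classical
  set Sσ : ℝ := ∑' n, auxSigma β (w a) (w b) n with hSσdef
  have hSσ0 : 0 ≤ Sσ := tsum_nonneg (fun n => auxSigma_nonneg _ _ _ _)
  set u : ℕ → ℝ := auxU (w a) (w b) with hudef
  have hupos : ∀ n, 0 < u n := auxU_pos (w a) (w b)
  set MA : ℝ := KA ^ 2 * (w a : ℝ) ^ (-(2 * β)) * Sσ with hMAdef
  set MB : ℝ := KB ^ 2 * (w b : ℝ) ^ (-(2 * β)) * Sσ with hMBdef
  have hMA0 : 0 ≤ MA :=
    mul_nonneg (mul_nonneg (sq_nonneg _) (Real.rpow_nonneg (Nat.cast_nonneg _) _)) hSσ0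
  have hMB0 : 0 ≤ MB :=
    mul_nonneg (mul_nonneg (sq_nonneg _) (Real.rpow_nonneg (Nat.cast_nonneg _) _)) hSσ0
  -- per-row summable weighted frobenius sums
  have hfA : ∀ c : {c : L // w c = w a}, Summable (fun e => u (w e) * frobSq (A c.1 e)) := by
    intro c
    have := (rowA_master w hw β A KA hA hKA a b hσs ({c} : Finset {c' : L // w c' = w a})).1
    simpa only [Finset.sum_singleton] using this
  have hfB : ∀ d : {d : L // w d = w b}, Summable (fun e => (u (w e))⁻¹ * frobSq (B e d.1)) := by
    intro d
    have := (colB_master w hw β B KB hB hKB a b hσs ({d} : Finset {d' : L // w d' = w b})).1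
    simpa only [Finset.sum_singleton] using this
  -- X and Y
  set XA : {c : L // w c = w a} → Fin 2 → ℝ :=
    fun c i => ∑' e, u (w e) * ∑ t, A c.1 e i t ^ 2 with hXAdef
  set YB : {d : L // w d = w b} → Fin 2 → ℝ :=
    fun d j => ∑' e, (u (w e))⁻¹ * ∑ t, B e d.1 t j ^ 2 with hYBdef
  have hXAs : ∀ (c : {c : L // w c = w a}) (i : Fin 2), Summable (fun e => u (w e) * ∑ t, A c.1 e i t ^ 2) := by
    intro c i
    refine Summable.of_nonneg_of_le
      (fun e => mul_nonneg (hupos _).le (Finset.sum_nonneg fun t _ => sq_nonneg _))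
      (fun e => mul_le_mul_of_nonneg_left (rowSq_le_frobSq _ i) (hupos _).le) (hfA c)
  have hYBs : ∀ (d : {d : L // w d = w b}) (j : Fin 2), Summable (fun e => (u (w e))⁻¹ * ∑ t, B e d.1 t j ^ 2) := by
    intro d j
    refine Summable.of_nonneg_of_le
      (fun e => mul_nonneg (inv_nonneg.mpr (hupos _).le)
        (Finset.sum_nonneg fun t _ => sq_nonneg _))
      (fun e => mul_le_mul_of_nonneg_left (colSq_le_frobSq _ j) (inv_nonneg.mpr (hupos _).le))
      (hfB d)
  have hXA0 : ∀ (c : {c : L // w c = w a}) (i : Fin 2), 0 ≤ XA c i := fun c i =>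
    tsum_nonneg (fun e => mul_nonneg (hupos _).le (Finset.sum_nonneg fun t _ => sq_nonneg _))
  have hYB0 : ∀ (d : {d : L // w d = w b}) (j : Fin 2), 0 ≤ YB d j := fun d j =>
    tsum_nonneg (fun e => mul_nonneg (inv_nonneg.mpr (hupos _).le)
      (Finset.sum_nonneg fun t _ => sq_nonneg _))
  -- partial sums of X and Y
  have hXsum : ∀ F₁ : Finset {c : L // w c = w a}, ∑ c ∈ F₁, ∑ i, XA c i ≤ MA := by
    intro F₁
    have e1 : ∀ c : {c : L // w c = w a}, ∑ i, XA c i = ∑' e, u (w e) * frobSq (A c.1 e) := by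
      intro c
      rw [hXAdef]
      rw [← Summable.tsum_finsetSum (fun i _ => hXAs c i)]
      refine tsum_congr (fun e => ?_)
      rw [← Finset.mul_sum]
      rfl
    calc ∑ c ∈ F₁, ∑ i, XA c i = ∑ c ∈ F₁, ∑' e, u (w e) * frobSq (A c.1 e) :=
          Finset.sum_congr rfl (fun c _ => e1 c)
      _ = ∑' e, ∑ c ∈ F₁, u (w e) * frobSq (A c.1 e) := (Summable.tsum_finsetSum (fun c _ => hfA c)).symm
      _ = ∑' e, u (w e) * ∑ c ∈ F₁, frobSq (A c.1 e) :=
          tsum_congr (fun e => (Finset.mul_sum _ _ _).symm)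
      _ ≤ MA := (rowA_master w hw β A KA hA hKA a b hσs F₁).2
  have hYsum : ∀ F₂ : Finset {d : L // w d = w b}, ∑ d ∈ F₂, ∑ j, YB d j ≤ MB := by
    intro F₂
    have e1 : ∀ d : {d : L // w d = w b}, ∑ j, YB d j = ∑' e, (u (w e))⁻¹ * frobSq (B e d.1) := by
      intro d
      rw [hYBdef]
      rw [← Summable.tsum_finsetSum (fun j _ => hYBs d j)]
      refine tsum_congr (fun e => ?_)
      rw [← Finset.mul_sum]
      congr 1
      rw [frobSq, Finset.sum_comm]
    calc ∑ d ∈ F₂, ∑ j, YB d j = ∑ d ∈ F₂, ∑' e, (u (w e))⁻¹ * frobSq (B e d.1) :=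
          Finset.sum_congr rfl (fun d _ => e1 d)
      _ = ∑' e, ∑ d ∈ F₂, (u (w e))⁻¹ * frobSq (B e d.1) := (Summable.tsum_finsetSum (fun d _ => hfB d)).symm
      _ = ∑' e, (u (w e))⁻¹ * ∑ d ∈ F₂, frobSq (B e d.1) :=
          tsum_congr (fun e => (Finset.mul_sum _ _ _).symm)
      _ ≤ MB := (colB_master w hw β B KB hB hKB a b hσs F₂).2
  -- entrywise bound
  have hent : ∀ (c : {c : L // w c = w a}) (d : {d : L // w d = w b}) (i j : Fin 2),
      (infMul A B c.1 d.1 i j) ^ 2 ≤ XA c i * YB d j := by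
    intro c d i j
    have hσcd : Summable (auxSigma β (w c.1) (w d.1)) := by
      rw [c.2, d.2]; exact hσs
    have habs : Summable fun e => |(A c.1 e * B e d.1) i j| :=
      entry_summ w hw β A B KA KB hA hB hKA hKB c.1 d.1 hσcd i j
    have hf : Summable fun e => (A c.1 e * B e d.1) i j := habs.of_abs
    have hrc : Summable fun e => ∑ t, |A c.1 e i t| * |B e d.1 t j| := by
      refine Summable.of_nonneg_of_le
        (fun e => Finset.sum_nonneg fun t _ => mul_nonneg (abs_nonneg _) (abs_nonneg _))
        (fun e => rowcol_le_weighted (hupos (w e)) _ _ i j)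
        (((hfA c).add (hfB d)).mul_left 2⁻¹)
    have h3 : ∑' e, ∑ t, |A c.1 e i t| * |B e d.1 t j|
        ≤ Real.sqrt (XA c i) * Real.sqrt (YB d j) := by
      refine Summable.tsum_le_of_sum_le hrc (fun E => ?_)
      set F : L × Fin 2 → ℝ := fun p => Real.sqrt (u (w p.1)) * |A c.1 p.1 i p.2| with hFdef
      set G : L × Fin 2 → ℝ :=
        fun p => (Real.sqrt (u (w p.1)))⁻¹ * |B p.1 d.1 p.2 j| with hGdef
      have hCS := Finset.sum_mul_sq_le_sq_mul_sq (E ×ˢ (Finset.univ : Finset (Fin 2))) F G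
      have hFG : ∑ p ∈ E ×ˢ (Finset.univ : Finset (Fin 2)), F p * G p
          = ∑ e ∈ E, ∑ t, |A c.1 e i t| * |B e d.1 t j| := by
        rw [Finset.sum_product]
        refine Finset.sum_congr rfl fun e _ => Finset.sum_congr rfl fun t _ => ?_
        rw [hFdef, hGdef]
        have hs0 : Real.sqrt (u (w e)) ≠ 0 := by
          rw [Real.sqrt_ne_zero']; exact hupos (w e)
        field_simp
      have hF2 : ∑ p ∈ E ×ˢ (Finset.univ : Finset (Fin 2)), F p ^ 2 ≤ XA c i := by
        rw [Finset.sum_product]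
        have e2 : ∀ e ∈ E, ∑ t, F (e, t) ^ 2 = u (w e) * ∑ t, A c.1 e i t ^ 2 := by
          intro e _
          rw [Finset.mul_sum]
          refine Finset.sum_congr rfl fun t _ => ?_
          rw [hFdef]
          simp only []
          rw [mul_pow, Real.sq_sqrt (hupos (w e)).le, sq_abs]
        rw [Finset.sum_congr rfl e2]
        exact Summable.sum_le_tsum E (fun e _ => mul_nonneg (hupos _).le
          (Finset.sum_nonneg fun t _ => sq_nonneg _)) (hXAs c i)
      have hG2 : ∑ p ∈ E ×ˢ (Finset.univ : Finset (Fin 2)), G p ^ 2 ≤ YB d j := by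
        rw [Finset.sum_product]
        have e2 : ∀ e ∈ E, ∑ t, G (e, t) ^ 2 = (u (w e))⁻¹ * ∑ t, B e d.1 t j ^ 2 := by
          intro e _
          rw [Finset.mul_sum]
          refine Finset.sum_congr rfl fun t _ => ?_
          rw [hGdef]
          simp only []
          rw [mul_pow, inv_pow, Real.sq_sqrt (hupos (w e)).le, sq_abs]
        rw [Finset.sum_congr rfl e2]
        exact Summable.sum_le_tsum E (fun e _ => mul_nonneg (inv_nonneg.mpr (hupos _).le)
          (Finset.sum_nonneg fun t _ => sq_nonneg _)) (hYBs d j)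
      have hsum0 : 0 ≤ ∑ e ∈ E, ∑ t, |A c.1 e i t| * |B e d.1 t j| :=
        Finset.sum_nonneg fun e _ => Finset.sum_nonneg fun t _ =>
          mul_nonneg (abs_nonneg _) (abs_nonneg _)
      have h4 : (∑ e ∈ E, ∑ t, |A c.1 e i t| * |B e d.1 t j|) ^ 2 ≤ XA c i * YB d j := by
        rw [← hFG]
        refine hCS.trans ?_
        refine mul_le_mul hF2 hG2 (Finset.sum_nonneg fun p _ => sq_nonneg _) (hXA0 c i)
      have := (Real.le_sqrt hsum0 (mul_nonneg (hXA0 c i) (hYB0 d j))).mpr h4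
      rwa [Real.sqrt_mul (hXA0 c i)] at this
    have h5 : |infMul A B c.1 d.1 i j| ≤ Real.sqrt (XA c i) * Real.sqrt (YB d j) := by
      have hform : infMul A B c.1 d.1 i j = ∑' e, (A c.1 e * B e d.1) i j := rfl
      rw [hform]
      have h6 : |∑' e, (A c.1 e * B e d.1) i j| ≤ ∑' e, |(A c.1 e * B e d.1) i j| := by
        have := norm_tsum_le_tsum_norm (f := fun e => (A c.1 e * B e d.1) i j)
          (by simpa only [Real.norm_eq_abs] using habs)
        simpa only [Real.norm_eq_abs] using this
      refine h6.trans ?_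
      refine le_trans (Summable.tsum_le_tsum (fun e => entry_abs_le _ _ i j) habs hrc) h3
    calc (infMul A B c.1 d.1 i j) ^ 2 = |infMul A B c.1 d.1 i j| ^ 2 := (sq_abs _).symm
      _ ≤ (Real.sqrt (XA c i) * Real.sqrt (YB d j)) ^ 2 :=
          pow_le_pow_left₀ (abs_nonneg _) h5 2
      _ = XA c i * YB d j := by
          rw [mul_pow, Real.sq_sqrt (hXA0 c i), Real.sq_sqrt (hYB0 d j)]
  -- frobenius of the product entry
  have hfrob : ∀ (c : {c : L // w c = w a}) (d : {d : L // w d = w b}),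
      frobSq (infMul A B c.1 d.1) ≤ (∑ i, XA c i) * (∑ j, YB d j) := by
    intro c d
    rw [frobSq, Finset.sum_mul_sum]
    refine Finset.sum_le_sum fun i _ => Finset.sum_le_sum fun j _ => hent c d i j
  -- sum over the block
  have hts : ∑' p : {c : L // w c = w a} × {d : L // w d = w b},
      frobSq (infMul A B p.1.1 p.2.1) ≤ MA * MB := by
    refine tsum_le_of_sum_le' (mul_nonneg hMA0 hMB0) (fun F => ?_)
    have hsub : F ⊆ (F.image Prod.fst) ×ˢ (F.image Prod.snd) := by
      intro p hp
      rw [Finset.mem_product]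
      exact ⟨Finset.mem_image_of_mem _ hp, Finset.mem_image_of_mem _ hp⟩
    calc ∑ p ∈ F, frobSq (infMul A B p.1.1 p.2.1)
        ≤ ∑ p ∈ F, (∑ i, XA p.1 i) * (∑ j, YB p.2 j) :=
          Finset.sum_le_sum fun p _ => hfrob p.1 p.2
      _ ≤ ∑ p ∈ (F.image Prod.fst) ×ˢ (F.image Prod.snd),
            (∑ i, XA p.1 i) * (∑ j, YB p.2 j) := by
          refine Finset.sum_le_sum_of_subset_of_nonneg hsub (fun p _ _ => ?_)
          exact mul_nonneg (Finset.sum_nonneg fun i _ => hXA0 p.1 i)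
            (Finset.sum_nonneg fun j _ => hYB0 p.2 j)
      _ = (∑ c ∈ F.image Prod.fst, ∑ i, XA c i) * (∑ d ∈ F.image Prod.snd, ∑ j, YB d j) := by
          rw [Finset.sum_mul_sum, Finset.sum_product]
      _ ≤ MA * MB := by
          refine mul_le_mul (hXsum _) (hYsum _)
            (Finset.sum_nonneg fun d _ => Finset.sum_nonneg fun j _ => hYB0 d j) hMA0
  -- conclude
  have hma : (0:ℝ) < (w a : ℝ) := by exact_mod_cast hw a
  have hmb : (0:ℝ) < (w b : ℝ) := by exact_mod_cast hw b
  have hhs : hsBlock w (infMul A B) a b ≤ Real.sqrt (MA * MB) := Real.sqrt_le_sqrt hts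
  set R : ℝ := KA * KB * ((w a : ℝ) ^ (-β) * (w b : ℝ) ^ (-β)) * Sσ with hRdef
  have hR0 : 0 ≤ R := by
    refine mul_nonneg (mul_nonneg (mul_nonneg hKA0 hKB0) ?_) hSσ0
    exact mul_nonneg (Real.rpow_nonneg hma.le _) (Real.rpow_nonneg hmb.le _)
  have hMAMB : MA * MB = R ^ 2 := by
    have em : (w a : ℝ) ^ (-(2 * β)) = ((w a : ℝ) ^ (-β)) ^ 2 := by
      rw [sq, ← Real.rpow_add hma]
      congr 1
      ring
    have ek : (w b : ℝ) ^ (-(2 * β)) = ((w b : ℝ) ^ (-β)) ^ 2 := by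
      rw [sq, ← Real.rpow_add hmb]
      congr 1
      ring
    rw [hMAdef, hMBdef, hRdef, em, ek]
    ring
  have hsqrt : Real.sqrt (MA * MB) = R := by rw [hMAMB, Real.sqrt_sq hR0]
  have hfac0 : 0 ≤ (1 + |(w a : ℝ) - (w b : ℝ)|) * (w a : ℝ) ^ β * (w b : ℝ) ^ β := by
    have h1 : (0:ℝ) ≤ 1 + |(w a : ℝ) - (w b : ℝ)| := by positivity
    exact mul_nonneg (mul_nonneg h1 (Real.rpow_nonneg hma.le _)) (Real.rpow_nonneg hmb.le _)
  have cm : (w a : ℝ) ^ β * (w a : ℝ) ^ (-β) = 1 := by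
    rw [← Real.rpow_add hma, add_neg_cancel, Real.rpow_zero]
  have ck : (w b : ℝ) ^ β * (w b : ℝ) ^ (-β) = 1 := by
    rw [← Real.rpow_add hmb, add_neg_cancel, Real.rpow_zero]
  have hfinal : (1 + |(w a : ℝ) - (w b : ℝ)|) * (w a : ℝ) ^ β * (w b : ℝ) ^ β * R
      = KA * KB * ((1 + |(w a : ℝ) - (w b : ℝ)|) * Sσ) := by
    calc (1 + |(w a : ℝ) - (w b : ℝ)|) * (w a : ℝ) ^ β * (w b : ℝ) ^ β * R
        = KA * KB * ((1 + |(w a : ℝ) - (w b : ℝ)|) * Sσ) *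
          (((w a : ℝ) ^ β * (w a : ℝ) ^ (-β)) * ((w b : ℝ) ^ β * (w b : ℝ) ^ (-β))) := by
          rw [hRdef]; ring
      _ = KA * KB * ((1 + |(w a : ℝ) - (w b : ℝ)|) * Sσ) := by rw [cm, ck]; ring
  calc (1 + |(w a : ℝ) - (w b : ℝ)|) * (w a : ℝ) ^ β * (w b : ℝ) ^ β *
        hsBlock w (infMul A B) a b
      ≤ (1 + |(w a : ℝ) - (w b : ℝ)|) * (w a : ℝ) ^ β * (w b : ℝ) ^ β * R :=
        mul_le_mul_of_nonneg_left (hhs.trans hsqrt.le) hfac0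
    _ = KA * KB * ((1 + |(w a : ℝ) - (w b : ℝ)|) * Sσ) := hfinal
    _ ≤ KA * KB * C₀ := mul_le_mul_of_nonneg_left hσb (mul_nonneg hKA0 hKB0)
    _ = C₀ * KA * KB := by ring


theorem stmt_15 (β : ℝ) (hβ : 0 < β) :
    ∃ C : ℝ, 0 < C ∧
      ∀ (L : Type) (_ : Countable L) (w : L → ℕ), (∀ a, 1 ≤ w a) →
      ∀ (A B : L → L → Matrix (Fin 2) (Fin 2) ℝ) (KA KB : ℝ),
        (∀ a b : L, Summable fun p : {c : L // w c = w a} × {d : L // w d = w b} =>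
          frobSq (A p.1.1 p.2.1)) →
        (∀ a b : L, Summable fun p : {c : L // w c = w a} × {d : L // w d = w b} =>
          frobSq (B p.1.1 p.2.1)) →
        (∀ a b : L, (1 + |(w a : ℝ) - (w b : ℝ)|) * (w a : ℝ) ^ β * (w b : ℝ) ^ β *
          hsBlock w A a b ≤ KA) →
        (∀ a b : L, (1 + |(w a : ℝ) - (w b : ℝ)|) * (w a : ℝ) ^ β * (w b : ℝ) ^ β *
          hsBlock w B a b ≤ KB) →
        (∀ c d : L, ∀ i j : Fin 2, Summable fun e : L => |(A c e * B e d) i j|) ∧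
        (∀ c d : L, ∀ i j : Fin 2, Summable fun e : L => |(B c e * A e d) i j|) ∧
        (∀ a b : L, (1 + |(w a : ℝ) - (w b : ℝ)|) * (w a : ℝ) ^ β * (w b : ℝ) ^ β *
          hsBlock w (infMul A B) a b ≤ C * KA * KB) ∧
        (∀ a b : L, (1 + |(w a : ℝ) - (w b : ℝ)|) * (w a : ℝ) ^ β * (w b : ℝ) ^ β *
          hsBlock w (infMul B A) a b ≤ C * KA * KB) := by
  obtain ⟨C₀, hC₀0, hscal⟩ := scalar_bound β hβ
  refine ⟨C₀ + 1, by linarith, ?_⟩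
  intro L _ w hw A B KA KB hA hB hKA hKB
  rcases isEmpty_or_nonempty L with hL | hL
  · exact ⟨fun c => isEmptyElim c, fun c => isEmptyElim c,
      fun a => isEmptyElim a, fun a => isEmptyElim a⟩
  obtain ⟨l₀⟩ := hL
  have hw0 : (0:ℝ) < (w l₀ : ℝ) := by exact_mod_cast hw l₀
  have hpref : 0 ≤ (1 + |(w l₀ : ℝ) - (w l₀ : ℝ)|) * (w l₀ : ℝ) ^ β * (w l₀ : ℝ) ^ β := by
    have h1 : (0:ℝ) ≤ 1 + |(w l₀ : ℝ) - (w l₀ : ℝ)| := by positivity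
    exact mul_nonneg (mul_nonneg h1 (Real.rpow_nonneg hw0.le _)) (Real.rpow_nonneg hw0.le _)
  have hKA0 : 0 ≤ KA := by
    have h := hKA l₀ l₀
    have h1 : 0 ≤ (1 + |(w l₀ : ℝ) - (w l₀ : ℝ)|) * (w l₀ : ℝ) ^ β * (w l₀ : ℝ) ^ β *
        hsBlock w A l₀ l₀ := mul_nonneg hpref (hsBlock_nonneg _ _ _ _)
    linarith
  have hKB0 : 0 ≤ KB := by
    have h := hKB l₀ l₀
    have h1 : 0 ≤ (1 + |(w l₀ : ℝ) - (w l₀ : ℝ)|) * (w l₀ : ℝ) ^ β * (w l₀ : ℝ) ^ β *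
        hsBlock w B l₀ l₀ := mul_nonneg hpref (hsBlock_nonneg _ _ _ _)
    linarith
  have hσ : ∀ a b : L, Summable (auxSigma β (w a) (w b)) ∧
      (1 + |((w a : ℕ) : ℝ) - ((w b : ℕ) : ℝ)|) * ∑' n, auxSigma β (w a) (w b) n ≤ C₀ :=
    fun a b => hscal (w a) (w b) (hw a) (hw b)
  have hKK : 0 ≤ KA * KB := mul_nonneg hKA0 hKB0
  refine ⟨?_, ?_, ?_, ?_⟩
  · intro c d i j
    exact entry_summ w hw β A B KA KB hA hB hKA hKB c d (hσ c d).1 i j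
  · intro c d i j
    exact entry_summ w hw β B A KB KA hB hA hKB hKA c d (hσ c d).1 i j
  · intro a b
    have h := prod_master w hw β C₀ A B KA KB hKA0 hKB0 hA hB hKA hKB a b (hσ a b).1 (hσ a b).2
    nlinarith [h, hKK]
  · intro a b
    have h := prod_master w hw β C₀ B A KB KA hKB0 hKA0 hB hA hKB hKA a b (hσ a b).1 (hσ a b).2
    nlinarith [h, hKK]
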